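/- Let α, β, γ, δ ∈ (0, π) satisfy cos α · cos γ = cos β · cos δ, suppose that α + ε₁β + ε₂γ + ε₃δ is not an integer multiple of 2π for any signs ε₁, ε₂, ε₃ ∈ {−1, 1}, and assume α ≠ π/2, γ ≠ π/2, δ ≠ π/2. Then tan δ ≠ tan α, tan δ ≠ tan γ, tan δ ≠ −tan α and tan δ ≠ −tan γ; consequently the involution factors λ = (tan δ + tan α)/(tan δ − tan α) and μ = (tan δ + tan γ)/(tan δ − tan γ) are well-defined nonzero real numbers. -/
import Mathlib


open Real

lemma tan_inj_aux (x y : ℝ) (hx : x ∈ Set.Ioo 0 π) (hy : y ∈ Set.Ioo 0 π)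
    (hx2 : x ≠ π / 2) (hy2 : y ≠ π / 2) (h : Real.tan x = Real.tan y) : x = y := by
  have hpi := Real.pi_pos
  rcases lt_or_gt_of_ne hx2 with hxl | hxr <;> rcases lt_or_gt_of_ne hy2 with hyl | hyr
  · exact Real.injOn_tan ⟨by linarith [hx.1], hxl⟩ ⟨by linarith [hy.1], hyl⟩ h
  · have h' : Real.tan x = Real.tan (y - π) := by rw [Real.tan_sub_pi]; exact h
    have := Real.injOn_tan   ⟨by linarith [hx.1], hxl⟩
      ⟨by linarith, by linarith [hy.2]⟩ h'
    linarith [hx.1, hy.2]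
  · have h' : Real.tan (x - π) = Real.tan y := by rw [Real.tan_sub_pi]; exact h
    have := Real.injOn_tan   ⟨by linarith, by linarith [hx.2]⟩
      ⟨by linarith [hy.1], hyl⟩ h'
    linarith [hy.1, hx.2]
  · have h' : Real.tan (x - π) = Real.tan (y - π) := by
      rw [Real.tan_sub_pi, Real.tan_sub_pi]; exact h
    have := Real.injOn_tan   ⟨by linarith, by linarith [hx.2]⟩
      ⟨by linarith, by linarith [hy.2]⟩ h'
    linarith

lemma cos_inj_aux (x y : ℝ) (hx : x ∈ Set.Ioo 0 π) (hy : y ∈ Set.Ioo 0 π)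
    (h : Real.cos x = Real.cos y) : x = y :=
  Real.injOn_cos ⟨le_of_lt hx.1, le_of_lt hx.2⟩ ⟨le_of_lt hy.1, le_of_lt hy.2⟩ h

lemma cos_ne_zero_aux (x : ℝ) (hx : x ∈ Set.Ioo 0 π) (hx2 : x ≠ π / 2) :
    Real.cos x ≠ 0 := by
  rcases lt_or_gt_of_ne hx2 with h | h
  · exact ne_of_gt (Real.cos_pos_of_mem_Ioo ⟨by linarith [hx.1, Real.pi_pos], h⟩)
  · exact ne_of_lt (Real.cos_neg_of_pi_div_two_lt_of_lt h (by linarith [hx.2, Real.pi_pos]))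

/-- Well-definedness of the involution factors of an elliptic orthodiagonal
spherical quadrilateral (generic case). -/
theorem stmt_8 (α β γ δ : ℝ)
    (hα : α ∈ Set.Ioo 0 π) (hβ : β ∈ Set.Ioo 0 π) (hγ : γ ∈ Set.Ioo 0 π)
    (hδ : δ ∈ Set.Ioo 0 π)
    (orth : cos α * cos γ = cos β * cos δ)
    (ell : ∀ ε₁ ε₂ ε₃ : ℝ, (ε₁ = 1 ∨ ε₁ = -1) → (ε₂ = 1 ∨ ε₂ = -1) →
      (ε₃ = 1 ∨ ε₃ = -1) → ∀ k : ℤ, α + ε₁ * β + ε₂ * γ + ε₃ * δ ≠ 2 * π * k)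
    (hα2 : α ≠ π / 2) (hγ2 : γ ≠ π / 2) (hδ2 : δ ≠ π / 2) :
    tan δ ≠ tan α ∧ tan δ ≠ tan γ ∧ tan δ ≠ -tan α ∧ tan δ ≠ -tan γ ∧
    (tan δ + tan α) / (tan δ - tan α) ≠ 0 ∧
    (tan δ + tan γ) / (tan δ - tan γ) ≠ 0 := by
  have hpi := Real.pi_pos
  have hcα := cos_ne_zero_aux α hα hα2
  have hcγ := cos_ne_zero_aux γ hγ hγ2
  have h1 : tan δ ≠ tan α := by
    intro h
    have hda : δ = α := tan_inj_aux δ α hδ hα hδ2 hα2 h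
    have : cos γ = cos β := by
      have horth := orth
      rw [hda] at horth
      exact mul_left_cancel₀ hcα (by linarith : cos α * cos γ = cos α * cos β)
    have hgb : γ = β := cos_inj_aux γ β hγ hβ this
    exact ell 1 (-1) (-1) (Or.inl rfl) (Or.inr rfl) (Or.inr rfl) 0 (by
      push_cast; rw [hda, hgb]; ring)
  have h2 : tan δ ≠ tan γ := by
    intro h
    have hdg : δ = γ := tan_inj_aux δ γ hδ hγ hδ2 hγ2 h
    have : cos α = cos β := by
      have := orth
      rw [hdg] at this
      exact mul_right_cancel₀ hcγ this
    have hab : α = β := cos_inj_aux α β hα hβ this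
    exact ell (-1) 1 (-1) (Or.inr rfl) (Or.inl rfl) (Or.inr rfl) 0 (by
      push_cast; rw [hdg, hab]; ring)
  have h3 : tan δ ≠ -tan α := by
    intro h
    have h' : tan δ = tan (π - α) := by rw [Real.tan_pi_sub]; exact h
    have hmem : π - α ∈ Set.Ioo 0 π := ⟨by linarith [hα.2], by linarith [hα.1]⟩
    have hne : π - α ≠ π / 2 := fun hc => hα2 (by linarith)
    have hda : δ = π - α := tan_inj_aux δ (π - α) hδ hmem hδ2 hne h'
    have hcd : cos δ = -cos α := by rw [hda, Real.cos_pi_sub]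
    have : cos γ = cos (π - β) := by
      rw [Real.cos_pi_sub]
      have := orth
      rw [hcd] at this
      nlinarith [mul_left_cancel₀ hcα (show cos α * cos γ = cos α * (-cos β) by linarith)]
    have hmemb : π - β ∈ Set.Ioo 0 π := ⟨by linarith [hβ.2], by linarith [hβ.1]⟩
    have hgb : γ = π - β := cos_inj_aux γ (π - β) hγ hmemb this
    exact ell 1 1 1 (Or.inl rfl) (Or.inl rfl) (Or.inl rfl) 1 (by
      push_cast; rw [hda, hgb]; ring)
  have h4 : tan δ ≠ -tan γ := by
    intro h
    have h' : tan δ = tan (π - γ) := by rw [Real.tan_pi_sub]; exact h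
    have hmem : π - γ ∈ Set.Ioo 0 π := ⟨by linarith [hγ.2], by linarith [hγ.1]⟩
    have hne : π - γ ≠ π / 2 := fun hc => hγ2 (by linarith)
    have hdg : δ = π - γ := tan_inj_aux δ (π - γ) hδ hmem hδ2 hne h'
    have hcd : cos δ = -cos γ := by rw [hdg, Real.cos_pi_sub]
    have : cos α = cos (π - β) := by
      rw [Real.cos_pi_sub]
      have := orth
      rw [hcd] at this
      have := mul_right_cancel₀ hcγ (show cos α * cos γ = (-cos β) * cos γ by linarith)
      linarith
    have hmemb : π - β ∈ Set.Ioo 0 π := ⟨by linarith [hβ.2], by linarith [hβ.1]⟩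
    have hab : α = π - β := cos_inj_aux α (π - β) hα hmemb this
    exact ell 1 1 1 (Or.inl rfl) (Or.inl rfl) (Or.inl rfl) 1 (by
      push_cast; rw [hdg, hab]; ring)
  refine ⟨h1, h2, h3, h4, ?_, ?_⟩
  · exact div_ne_zero (fun hc => h3 (by linarith)) (sub_ne_zero_of_ne h1)
  · exact div_ne_zero (fun hc => h4 (by linarith)) (sub_ne_zero_of_ne h2)
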